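/- Let A be a real antisymmetric n × n matrix (Aᵀ = −A) and V a complex symmetric n × n matrix. Define the 2n × 2n complex matrix F by the block form F = [[−A, I], [A² − V/2, −A]], and for λ ∈ ℂ set T(λ) = λ²I + 2λA + (1/2)V. Then det(λ·I_{2n} − F) = det(T(λ)) for every λ ∈ ℂ; in particular, λ₀ ∈ ℂ is an eigenvalue of F if and only if T(λ₀) has nontrivial kernel. -/
import Mathlib


open Matrix

/-- for `A` real antisymmetric and `V` complex symmetric, the Hamilton
matrix `F = [[−A, I], [A² − V/2, −A]]` satisfies `det(λ − F) = det(T(λ))` with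
`T(λ) = λ² + 2λA + V/2`; in particular `λ₀` is an eigenvalue of `F` iff
`Ker T(λ₀) ≠ {0}`. -/
theorem det_hamilton_matrix_eq_det_pencil
    (n : ℕ) (A : Matrix (Fin n) (Fin n) ℝ) (hA : Aᵀ = -A)
    (V : Matrix (Fin n) (Fin n) ℂ) (hV : Vᵀ = V)
    (Ac : Matrix (Fin n) (Fin n) ℂ) (hAc : Ac = A.map Complex.ofReal)
    (F : Matrix (Fin n ⊕ Fin n) (Fin n ⊕ Fin n) ℂ)
    (hF : F = Matrix.fromBlocks (-Ac) 1 (Ac * Ac - (1/2 : ℂ) • V) (-Ac))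
    (T : ℂ → Matrix (Fin n) (Fin n) ℂ)
    (hT : ∀ lam : ℂ, T lam = lam ^ 2 • 1 + (2 * lam) • Ac + (1/2 : ℂ) • V) :
    (∀ lam : ℂ,
      (lam • (1 : Matrix (Fin n ⊕ Fin n) (Fin n ⊕ Fin n) ℂ) - F).det = (T lam).det) ∧
    (∀ lam₀ : ℂ,
      (lam₀ • (1 : Matrix (Fin n ⊕ Fin n) (Fin n ⊕ Fin n) ℂ) - F).det = 0
        ↔ ∃ v : Fin n → ℂ, v ≠ 0 ∧ T lam₀ *ᵥ v = 0) := by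
  have key : ∀ lam : ℂ,
      (lam • (1 : Matrix (Fin n ⊕ Fin n) (Fin n ⊕ Fin n) ℂ) - F).det = (T lam).det := by
    intro lam
    set X : Matrix (Fin n) (Fin n) ℂ := lam • 1 + Ac with hX
    set M := lam • (1 : Matrix (Fin n ⊕ Fin n) (Fin n ⊕ Fin n) ℂ) - F with hM
    have hMblocks : M = Matrix.fromBlocks X (-1) ((1/2 : ℂ) • V - Ac * Ac) X := by
      rw [hM, hF, ← Matrix.fromBlocks_one, Matrix.fromBlocks_smul, sub_eq_add_neg,
        Matrix.fromBlocks_neg, Matrix.fromBlocks_add, Matrix.fromBlocks_inj]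
      exact ⟨by simp [hX], by simp, by simp, by simp [hX]⟩
    set L : Matrix (Fin n ⊕ Fin n) (Fin n ⊕ Fin n) ℂ := Matrix.fromBlocks 1 0 X 1 with hL
    set J : Matrix (Fin n ⊕ Fin n) (Fin n ⊕ Fin n) ℂ := Matrix.fromBlocks 0 1 (-1) 0 with hJ
    have hdetL : L.det = 1 := by
      rw [hL, Matrix.det_fromBlocks_zero₁₂]; simp
    have hdetJ : J.det = 1 := by
      have : J = Matrix.fromBlocks 1 1 0 1 * Matrix.fromBlocks 1 0 (-1) 1 *
          Matrix.fromBlocks 1 1 0 1 := by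
        simp [hJ, Matrix.fromBlocks_multiply]
      rw [this, Matrix.det_mul, Matrix.det_mul, Matrix.det_fromBlocks_zero₂₁,
        Matrix.det_fromBlocks_zero₁₂]
      simp
    have hprod : J * (M * L) = Matrix.fromBlocks (T lam) X 0 1 := by
      rw [hMblocks, hL, hJ, Matrix.fromBlocks_multiply, Matrix.fromBlocks_multiply, hT,
        Matrix.fromBlocks_inj]
      refine ⟨?_, by simp [hX], by simp, by simp [hX]⟩
      rw [hX]
      simp [Matrix.add_mul, Matrix.mul_add, Matrix.smul_mul, Matrix.mul_smul, smul_smul,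
        pow_two, two_mul, add_smul]
      abel
    have := congrArg Matrix.det hprod
    rw [Matrix.det_mul, Matrix.det_mul, hdetJ, hdetL, one_mul, mul_one,
      Matrix.det_fromBlocks_zero₂₁, Matrix.det_one, mul_one] at this
    exact this
  refine ⟨key, fun lam₀ => ?_⟩
  rw [key lam₀, ← Matrix.exists_mulVec_eq_zero_iff]
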